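/- If F, G : 2^ω → 2^ω are superapproximable, then the composition G∘F is superapproximable; moreover a Turing functional superapproximating G∘F may be found uniformly from Turing functionals superapproximating G and F. -/

import Mathlib

noncomputable section

open Filter

/-! ### Computability preliminaries -/

/-- The finite initial segment of length `k` of a sequence. -/
def seg (f : ℕ → ℕ) (k : ℕ) : List ℕ := (List.range k).map f

/-- The finite initial segment of length `k` of an element of Cantor space. -/
def segB (A : ℕ → Bool) (k : ℕ) : List Bool := (List.range k).map A

/-- The join (interleaving) of two sequences. -/
def joinSeq (f g : ℕ → ℕ) : ℕ → ℕ := fun n => if n % 2 = 0 then f (n / 2) else g (n / 2)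

/-- Turing reducibility: there is a Turing functional (presented as a computable map on
finite oracle segments, consistent along the oracle `g`) computing `f` from `g`. -/
def TuringReducibleTo (f g : ℕ → ℕ) : Prop :=
  ∃ φ : List ℕ → ℕ → Option ℕ, Computable₂ φ ∧
    (∀ n k₁ k₂ m₁ m₂, φ (seg g k₁) n = some m₁ → φ (seg g k₂) n = some m₂ → m₁ = m₂) ∧
    (∀ n, ∃ k, φ (seg g k) n = some (f n))

/-- A Turing ideal, presented as a degree-invariant collection of functions `ℕ → ℕ`
closed under join and downward closed under Turing reducibility. -/
structure IsTuringIdeal (I : Set (ℕ → ℕ)) : Prop where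
  nonempty : I.Nonempty
  ne_univ : I ≠ Set.univ
  join_mem : ∀ f g, f ∈ I → g ∈ I → joinSeq f g ∈ I
  downward : ∀ f g, f ∈ I → TuringReducibleTo g f → g ∈ I

/-- A (characteristic function of a) subtree of `ω^{<ω}`. -/
def IsTreeB (T : List ℕ → Bool) : Prop :=
  ∀ l₁ l₂ : List ℕ, l₁ <+: l₂ → T l₂ = true → T l₁ = true

/-- A function on an encodable domain is computable from the oracle `c`. -/
def funRed {α β : Type} [Denumerable α] [Primcodable β] (f : α → β) (c : ℕ → ℕ) : Prop :=
  TuringReducibleTo (fun n => Encodable.encode (f (Denumerable.ofNat α n))) c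

/-- `d` is a PA degree relative to `c`: `d` computes a path through every infinite
`c`-computable finite-branching (`c`-computably bounded) tree. -/
def PARel (d c : ℕ → ℕ) : Prop :=
  ∀ (T : List ℕ → Bool) (b : List ℕ → ℕ),
    IsTreeB T → funRed T c → funRed b c →
    (∀ l x, T (l ++ [x]) = true → x < b l) →
    (∀ n, ∃ l : List ℕ, l.length = n ∧ T l = true) →
    ∃ p : ℕ → ℕ, TuringReducibleTo p d ∧ ∀ k, T (seg p k) = true

/-- A Scott ideal: a Turing ideal containing, for each of its members,
a PA degree relative to that member. -/
def IsScottIdeal (I : Set (ℕ → ℕ)) : Prop :=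
  IsTuringIdeal I ∧ ∀ c ∈ I, ∃ d ∈ I, PARel d c

/-- A set of natural numbers is `Π⁰₁`. -/
def Pi01 (S : Set ℕ) : Prop :=
  ∃ R : ℕ → ℕ → Bool, Computable₂ R ∧ ∀ m, m ∈ S ↔ ∀ s, R m s = true

/-- A set of natural numbers is `Σ⁰₂`. -/
def Sigma02 (S : Set ℕ) : Prop :=
  ∃ R : ℕ → ℕ → ℕ → Bool,
    Computable (fun x : ℕ × ℕ × ℕ => R x.1 x.2.1 x.2.2) ∧
    ∀ m, m ∈ S ↔ ∃ a, ∀ b, R m a b = true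

/-- The jump of an oracle `A : ℕ → ℕ`: the `i`-th partial computable function,
run on (codes of) finite initial segments of `A` with input `i`, halts. -/
def haltsRelN (A : ℕ → ℕ) (i : ℕ) : Prop :=
  ∃ s, ((Denumerable.ofNat Nat.Partrec.Code i).eval
      (Nat.pair (Encodable.encode (seg A s)) i)).Dom

/-- The jump of an oracle `A : ℕ → Bool`. -/
def haltsRelB (A : ℕ → Bool) (i : ℕ) : Prop :=
  ∃ s, ((Denumerable.ofNat Nat.Partrec.Code i).eval
      (Nat.pair (Encodable.encode (segB A s)) i)).Dom

/-- The Turing functional with index `e`, given oracle `A`, computes the total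
function `B` (consistently along `A`). -/
def OracleComputes (e : ℕ) (A B : ℕ → ℕ) : Prop :=
  (∀ n s₁ s₂ m₁ m₂,
      (Denumerable.ofNat Nat.Partrec.Code e).eval
          (Nat.pair (Encodable.encode (seg A s₁)) n) = Part.some m₁ →
      (Denumerable.ofNat Nat.Partrec.Code e).eval
          (Nat.pair (Encodable.encode (seg A s₂)) n) = Part.some m₂ →
      m₁ = m₂) ∧
  (∀ n, ∃ s,
      (Denumerable.ofNat Nat.Partrec.Code e).eval
          (Nat.pair (Encodable.encode (seg A s)) n) = Part.some (B n))

/-- `φ` superapproximates `F : 2^ω → 2^ω`: for every oracle `A` and every `n`, the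
stage-`s` values `φ(A↾s, n, s)` converge to the characteristic function of the
jump of `F(A)` at `n`. -/
def Superapproximates (φ : List Bool → ℕ → ℕ → Bool) (F : (ℕ → Bool) → ℕ → Bool) : Prop :=
  ∀ A : ℕ → Bool, ∀ n : ℕ, ∃ b : Bool,
    (∀ᶠ s in atTop, φ (segB A s) n s = b) ∧ (b = true ↔ haltsRelB (F A) n)

/-- `F : 2^ω → 2^ω` is superapproximable. -/
def Superapproximable (F : (ℕ → Bool) → ℕ → Bool) : Prop :=
  ∃ φ : List Bool → ℕ → ℕ → Bool,
    Computable (fun x : List Bool × ℕ × ℕ => φ x.1 x.2.1 x.2.2) ∧ Superapproximates φ F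

/-- The Turing functional with index `e` superapproximates `F : 2^ω → 2^ω`. -/
def CodeSuperapprox (e : ℕ) (F : (ℕ → Bool) → ℕ → Bool) : Prop :=
  ∀ A : ℕ → Bool, ∀ n : ℕ, ∃ b : Bool,
    (∀ᶠ s in atTop,
      (Denumerable.ofNat Nat.Partrec.Code e).eval
          (Nat.pair (Encodable.encode (segB A s)) (Nat.pair n s)) = Part.some (cond b 1 0)) ∧
    (b = true ↔ haltsRelB (F A) n)

/-! ### The first-order language of groups -/

/-- Terms of the language of groups, with variables among `Fin k`. -/
inductive GrpTerm : ℕ → Type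
  | var : ∀ {k}, Fin k → GrpTerm k
  | one : ∀ {k}, GrpTerm k
  | mul : ∀ {k}, GrpTerm k → GrpTerm k → GrpTerm k
  | inv : ∀ {k}, GrpTerm k → GrpTerm k

/-- Evaluation of a group term in a group `G` under a valuation of the variables. -/
def GrpTerm.eval {G : Type*} [Group G] : ∀ {k}, GrpTerm k → (Fin k → G) → G
  | _, .var i, v => v i
  | _, .one, _ => 1
  | _, .mul t s, v => t.eval v * s.eval v
  | _, .inv t, v => (t.eval v)⁻¹

/-- First-order formulas of the language of groups (with negation pushed to atoms),
with free variables among `Fin k`.  Quantifiers bind the variable `0`. -/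
inductive GrpFormula : ℕ → Type
  | eq : ∀ {k}, GrpTerm k → GrpTerm k → GrpFormula k
  | ne : ∀ {k}, GrpTerm k → GrpTerm k → GrpFormula k
  | and : ∀ {k}, GrpFormula k → GrpFormula k → GrpFormula k
  | or : ∀ {k}, GrpFormula k → GrpFormula k → GrpFormula k
  | all : ∀ {k}, GrpFormula (k + 1) → GrpFormula k
  | ex : ∀ {k}, GrpFormula (k + 1) → GrpFormula k

/-- Tarskian satisfaction of a group formula in a group `G`. -/
def GrpFormula.Sat {G : Type*} [Group G] : ∀ {k}, GrpFormula k → (Fin k → G) → Prop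
  | _, .eq t s, v => t.eval v = s.eval v
  | _, .ne t s, v => t.eval v ≠ s.eval v
  | _, .and φ ψ, v => φ.Sat v ∧ ψ.Sat v
  | _, .or φ ψ, v => φ.Sat v ∨ ψ.Sat v
  | _, .all φ, v => ∀ g : G, φ.Sat (Fin.cons g v)
  | _, .ex φ, v => ∃ g : G, φ.Sat (Fin.cons g v)

/-- Satisfaction relativized to a subset `S` of `G` (e.g. a subgroup):
quantifiers range over `S`. -/
def GrpFormula.SatOn {G : Type*} [Group G] (S : Set G) :
    ∀ {k}, GrpFormula k → (Fin k → G) → Prop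
  | _, .eq t s, v => t.eval v = s.eval v
  | _, .ne t s, v => t.eval v ≠ s.eval v
  | _, .and φ ψ, v => φ.SatOn S v ∧ ψ.SatOn S v
  | _, .or φ ψ, v => φ.SatOn S v ∨ ψ.SatOn S v
  | _, .all φ, v => ∀ g ∈ S, φ.SatOn S (Fin.cons g v)
  | _, .ex φ, v => ∃ g ∈ S, φ.SatOn S (Fin.cons g v)

/-- A formula is positive iff it does not use negation (i.e. no negated atoms). -/
def GrpFormula.Positive : ∀ {k}, GrpFormula k → Prop
  | _, .eq _ _ => True
  | _, .ne _ _ => False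
  | _, .and φ ψ => φ.Positive ∧ ψ.Positive
  | _, .or φ ψ => φ.Positive ∧ ψ.Positive
  | _, .all φ => φ.Positive
  | _, .ex φ => φ.Positive

/-- A formula is quantifier-free iff it uses no quantifiers. -/
def GrpFormula.QuantifierFree : ∀ {k}, GrpFormula k → Prop
  | _, .eq _ _ => True
  | _, .ne _ _ => True
  | _, .and φ ψ => φ.QuantifierFree ∧ ψ.QuantifierFree
  | _, .or φ ψ => φ.QuantifierFree ∧ ψ.QuantifierFree
  | _, .all _ => False
  | _, .ex _ => False

/-- A quantifier-free formula is negative iff it is built from negated atoms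
(inequations) using `∧` and `∨`. -/
def GrpFormula.NegQF : ∀ {k}, GrpFormula k → Prop
  | _, .eq _ _ => False
  | _, .ne _ _ => True
  | _, .and φ ψ => φ.NegQF ∧ ψ.NegQF
  | _, .or φ ψ => φ.NegQF ∧ ψ.NegQF
  | _, .all _ => False
  | _, .ex _ => False

/-- A Gödel numbering of group terms. -/
def GrpTerm.encode : ∀ {k}, GrpTerm k → ℕ
  | _, .var i => Nat.pair 0 i.val
  | _, .one => Nat.pair 1 0
  | _, .mul t s => Nat.pair 2 (Nat.pair t.encode s.encode)
  | _, .inv t => Nat.pair 3 t.encode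

/-- A Gödel numbering of group formulas. -/
def GrpFormula.encode : ∀ {k}, GrpFormula k → ℕ
  | _, .eq t s => Nat.pair 0 (Nat.pair t.encode s.encode)
  | _, .ne t s => Nat.pair 1 (Nat.pair t.encode s.encode)
  | _, .and φ ψ => Nat.pair 2 (Nat.pair φ.encode ψ.encode)
  | _, .or φ ψ => Nat.pair 3 (Nat.pair φ.encode ψ.encode)
  | _, .all φ => Nat.pair 4 φ.encode
  | _, .ex φ => Nat.pair 5 φ.encode

/-- `Σ₀`- and `Π₀`-separated formulas: positive formulas, or conjunctions of a positive
formula with a quantifier-free negative formula. -/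
inductive Sep0 : ∀ {k}, GrpFormula k → Prop
  | pos {k} {φ : GrpFormula k} : φ.Positive → Sep0 φ
  | conj {k} {φ ψ : GrpFormula k} : φ.Positive → ψ.NegQF → Sep0 (φ.and ψ)

mutual
  /-- `Σₙ`-separated formulas. -/
  inductive SigmaSep : ℕ → ∀ {k}, GrpFormula k → Prop
    | base {k} {φ : GrpFormula k} : Sep0 φ → SigmaSep 0 φ
    | ofPi {n k} {φ : GrpFormula k} : PiSep n φ → SigmaSep (n + 1) φ
    | ex {n k} {φ : GrpFormula (k + 1)} : SigmaSep (n + 1) φ → SigmaSep (n + 1) φ.ex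

  /-- `Πₙ`-separated formulas. -/
  inductive PiSep : ℕ → ∀ {k}, GrpFormula k → Prop
    | base {k} {φ : GrpFormula k} : Sep0 φ → PiSep 0 φ
    | ofSigma {n k} {φ : GrpFormula k} : SigmaSep n φ → PiSep (n + 1) φ
    | all {n k} {φ : GrpFormula (k + 1)} : PiSep (n + 1) φ → PiSep (n + 1) φ.all
end

mutual
  /-- Positive prenex `Σₙ` formulas. -/
  inductive PosSigma : ℕ → ∀ {k}, GrpFormula k → Prop
    | base {k} {φ : GrpFormula k} : φ.QuantifierFree → φ.Positive → PosSigma 0 φ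
    | ofPi {n k} {φ : GrpFormula k} : PosPi n φ → PosSigma (n + 1) φ
    | ex {n k} {φ : GrpFormula (k + 1)} : PosSigma (n + 1) φ → PosSigma (n + 1) φ.ex

  /-- Positive prenex `Πₙ` formulas. -/
  inductive PosPi : ℕ → ∀ {k}, GrpFormula k → Prop
    | base {k} {φ : GrpFormula k} : φ.QuantifierFree → φ.Positive → PosPi 0 φ
    | ofSigma {n k} {φ : GrpFormula k} : PosSigma n φ → PosPi (n + 1) φ
    | all {n k} {φ : GrpFormula (k + 1)} : PosPi (n + 1) φ → PosPi (n + 1) φ.all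
end

/-- Purely existential formulas: a block of `∃`'s applied to a quantifier-free formula. -/
inductive ExistentialForm : ∀ {k}, GrpFormula k → Prop
  | base {k} {φ : GrpFormula k} : φ.QuantifierFree → ExistentialForm φ
  | ex {k} {φ : GrpFormula (k + 1)} : ExistentialForm φ → ExistentialForm φ.ex

/-- Purely universal formulas: a block of `∀`'s applied to a quantifier-free formula. -/
inductive UniversalForm : ∀ {k}, GrpFormula k → Prop
  | base {k} {φ : GrpFormula k} : φ.QuantifierFree → UniversalForm φ
  | all {k} {φ : GrpFormula (k + 1)} : UniversalForm φ → UniversalForm φ.all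

/-- Prefix a block of `m` existential quantifiers. -/
def exBlock {k : ℕ} : ∀ m : ℕ, GrpFormula (k + m) → GrpFormula k
  | 0, φ => φ
  | m + 1, φ => exBlock m φ.ex

/-- Prefix a block of `m` universal quantifiers. -/
def allBlock {k : ℕ} : ∀ m : ℕ, GrpFormula (k + m) → GrpFormula k
  | 0, φ => φ
  | m + 1, φ => allBlock m φ.all

/-- Extend a valuation of the `k` parameters by a valuation of the `m`
quantified variables (which occupy the initial positions). -/
def consTuple {G : Type*} : ∀ {m k : ℕ}, (Fin m → G) → (Fin k → G) → Fin (k + m) → G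
  | 0, _, _, a => a
  | _ + 1, _, g, a => Fin.cons (g 0) (consTuple (fun i => g i.succ) a)

/-- The join of an `m`-tuple of sequences. -/
def tupleJoin {m : ℕ} (v : Fin m → ℕ → ℕ) : ℕ → ℕ :=
  fun n => Encodable.encode (List.ofFn fun i => v i n)

/-! ### The computable presentation of `Q̄` and its Galois group -/

/-- A fixed computable presentation of the algebraic closure of `ℚ`. -/
abbrev Qbar : Type := AlgebraicClosure ℚ

/-- The absolute Galois group of `ℚ`, i.e. the automorphism group of `Q̄`. -/
abbrev GalQ : Type := Qbar ≃ₐ[ℚ] Qbar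

/-- A computable presentation of `Q̄` together with the fixed computable chain
`ℚ = F₀ ⊂ F₁ ⊂ ⋯` of finite normal extensions of `ℚ` with union `Q̄`,
each generated by a primitive generator `zₙ`. -/
structure GaloisPresentation where
  e : Qbar ≃ ℕ
  F : ℕ → IntermediateField ℚ Qbar
  z : ℕ → Qbar
  F_zero : F 0 = ⊥
  F_lt : ∀ n, F n < F (n + 1)
  normal : ∀ n, Normal ℚ (F n)
  finiteDim : ∀ n, FiniteDimensional ℚ (F n)
  unionEq : ∀ x : Qbar, ∃ n, x ∈ F n
  genEq : ∀ n, F n = IntermediateField.adjoin ℚ {z n}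
  add_comp : Computable₂ fun a b => e (e.symm a + e.symm b)
  mul_comp : Computable₂ fun a b => e (e.symm a * e.symm b)
  neg_comp : Computable fun a => e (-e.symm a)
  inv_comp : Computable fun a => e (e.symm a)⁻¹
  mem_dec : ∃ d : ℕ → ℕ → Bool, Computable₂ d ∧ ∀ n a, d n a = true ↔ e.symm a ∈ F n
  z_comp : Computable fun n => e (z n)

/-- The identification of an automorphism `f` with the sequence `(f(z₁), f(z₂), …)`. -/
def GaloisPresentation.seqOf (P : GaloisPresentation) (f : GalQ) : ℕ → ℕ :=
  fun n => P.e (f (P.z (n + 1)))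

/-- The restriction of an automorphism of `Q̄` to the finite normal extension `Fₙ`. -/
def GaloisPresentation.restrictAut (P : GaloisPresentation) (n : ℕ) (f : GalQ) :
    ↥(P.F n) ≃ₐ[ℚ] ↥(P.F n) :=
  haveI := P.normal n
  AlgEquiv.restrictNormal f ↥(P.F n)

/-- The level-`n` node of the Galois tree determined by an automorphism `σ`. -/
def nodeOf (P : GaloisPresentation) (n : ℕ) (σ : GalQ) : List ℕ :=
  (List.range n).map fun i => P.e (σ (P.z (i + 1)))

/-- Membership in the Galois tree `T_Q̄`: the nodes at level `n` are the tuples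
`(σ(z₁), …, σ(zₙ))` for automorphisms `σ`. -/
def TQmem (P : GaloisPresentation) (l : List ℕ) : Prop :=
  ∃ σ : GalQ, l = nodeOf P l.length σ

/-- The join of the parameter tuple `a`, as a single oracle. -/
def paramJoin (P : GaloisPresentation) {k : ℕ} (a : Fin k → GalQ) : ℕ → ℕ :=
  tupleJoin fun i => P.seqOf (a i)

/-- A bare computable presentation of `Q̄` (without a fixed chain): the field
operations are computable and finitely generated subfields are uniformly decidable. -/
structure CompPresentation where
  e : Qbar ≃ ℕ
  add_comp : Computable₂ fun a b => e (e.symm a + e.symm b)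
  mul_comp : Computable₂ fun a b => e (e.symm a * e.symm b)
  neg_comp : Computable fun a => e (-e.symm a)
  inv_comp : Computable fun a => e (e.symm a)⁻¹
  fg_dec : ∃ d : List ℕ → ℕ → Bool, Computable₂ d ∧
    ∀ (l : List ℕ) (a : ℕ),
      d l a = true ↔ e.symm a ∈ IntermediateField.adjoin ℚ {x : Qbar | ∃ b ∈ l, e.symm b = x}

end


open Filter

namespace SAux

variable {α β : Type*}

def optFind (f : ℕ → Option α) (m : ℕ) : Option α :=
  (List.range m).foldl (fun acc k => acc <|> f k) none

def optFindLast (f : ℕ → Option α) (m : ℕ) : Option α :=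
  (List.range m).foldl (fun acc k => f k <|> acc) none

@[simp] theorem optFind_zero (f : ℕ → Option α) : optFind f 0 = none := rfl
@[simp] theorem optFindLast_zero (f : ℕ → Option α) : optFindLast f 0 = none := rfl

theorem optFind_succ (f : ℕ → Option α) (m : ℕ) :
    optFind f (m + 1) = (optFind f m <|> f m) := by
  simp [optFind, List.range_succ]

theorem optFindLast_succ (f : ℕ → Option α) (m : ℕ) :
    optFindLast f (m + 1) = (f m <|> optFindLast f m) := by
  simp [optFindLast, List.range_succ]

theorem optFind_spec (f : ℕ → Option α) (m : ℕ) :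
    (optFind f m = none ∧ ∀ k < m, f k = none) ∨
      ∃ k, k < m ∧ optFind f m = f k ∧ (f k).isSome ∧ ∀ j < k, f j = none := by
  induction m with
  | zero => exact Or.inl ⟨rfl, by omega⟩
  | succ m ih =>
    rcases ih with ⟨hn, hall⟩ | ⟨k, hk, heq, hs, hnone⟩
    · rw [optFind_succ, hn]
      cases hfm : f m with
      | none =>
        refine Or.inl ⟨by simp, fun k hk => ?_⟩
        rcases Nat.lt_succ_iff_lt_or_eq.1 hk with h | rfl
        · exact hall _ h
        · exact hfm
      | some v =>
        exact Or.inr ⟨m, Nat.lt_succ_self _, by simp [hfm], by simp [hfm], hall⟩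
    · rw [optFind_succ, heq]
      rcases Option.isSome_iff_exists.1 hs with ⟨v, hv⟩
      exact Or.inr ⟨k, by omega, by simp [hv], hs, hnone⟩

theorem optFindLast_spec (f : ℕ → Option α) (m : ℕ) :
    (optFindLast f m = none ∧ ∀ k < m, f k = none) ∨
      ∃ k, k < m ∧ optFindLast f m = f k ∧ (f k).isSome ∧
        ∀ j, k < j → j < m → f j = none := by
  induction m with
  | zero => exact Or.inl ⟨rfl, by omega⟩
  | succ m ih =>
    rw [optFindLast_succ]
    cases hfm : f m with
    | some v =>
      exact Or.inr ⟨m, Nat.lt_succ_self _, by simp [hfm], by simp [hfm], by omega⟩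
    | none =>
      rw [show ((none : Option α) <|> optFindLast f m) = optFindLast f m from rfl]
      rcases ih with ⟨hn, hall⟩ | ⟨k, hk, heq, hs, hnone⟩
      · refine Or.inl ⟨hn, fun k hk => ?_⟩
        rcases Nat.lt_succ_iff_lt_or_eq.1 hk with h | rfl
        · exact hall _ h
        · exact hfm
      · refine Or.inr ⟨k, by omega, heq, hs, fun j h1 h2 => ?_⟩
        rcases Nat.lt_succ_iff_lt_or_eq.1 h2 with h | rfl
        · exact hnone _ h1 h
        · exact hfm

def bexist (q : ℕ → Bool) (m : ℕ) : Bool :=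
  (optFind (fun t => bif q t then some 0 else none) m).isSome

def ballB (q : ℕ → Bool) (m : ℕ) : Bool := !(bexist (fun t => !(q t)) m)

theorem bexist_iff (q : ℕ → Bool) (m : ℕ) :
    bexist q m = true ↔ ∃ t, t < m ∧ q t = true := by
  unfold bexist
  rcases optFind_spec (fun t => bif q t then some 0 else none) m with ⟨hn, hall⟩ |
    ⟨k, hk, heq, hs, _⟩
  · rw [hn]
    simp only [Option.isSome_none, Bool.false_eq_true, false_iff]
    rintro ⟨t, ht, hq⟩
    have := hall t ht
    rw [hq] at this
    simp at this
  · rw [heq]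
    cases hq : q k with
    | false => rw [hq] at hs; simp at hs
    | true =>
      simp only [hq, cond_true, Option.isSome_some, true_iff]
      exact ⟨k, hk, hq⟩

theorem ballB_iff (q : ℕ → Bool) (m : ℕ) :
    ballB q m = true ↔ ∀ t, t < m → q t = true := by
  unfold ballB
  rw [Bool.not_eq_true']
  constructor
  · intro h t ht
    by_contra hq
    rw [Bool.not_eq_true] at hq
    have : bexist (fun t => !(q t)) m = true := (bexist_iff _ _).2 ⟨t, ht, by simp [hq]⟩
    rw [h] at this; exact Bool.false_ne_true this
  · intro h
    rw [← Bool.not_eq_true, bexist_iff]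
    rintro ⟨t, ht, hq⟩
    rw [h t ht] at hq
    simp at hq

section PrimrecLemmas

variable {γ : Type*} [Primcodable γ] [Primcodable α]

theorem optFind_primrec {f : γ → ℕ → Option α} (hf : Primrec₂ f) :
    Primrec₂ fun a m => optFind (f a) m := by
  have := Primrec.list_foldl (f := fun p : γ × ℕ => List.range p.2)
    (g := fun _ : γ × ℕ => (none : Option α))
    (h := fun (p : γ × ℕ) (q : Option α × ℕ) => q.1 <|> f p.1 q.2)
    (Primrec.list_range.comp Primrec.snd) (Primrec.const none)
    (Primrec.option_orElse.comp (Primrec.fst.comp Primrec.snd)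
      (hf.comp (Primrec.fst.comp Primrec.fst) (Primrec.snd.comp Primrec.snd)))
  exact this.of_eq fun p => rfl

theorem optFindLast_primrec {f : γ → ℕ → Option α} (hf : Primrec₂ f) :
    Primrec₂ fun a m => optFindLast (f a) m := by
  have := Primrec.list_foldl (f := fun p : γ × ℕ => List.range p.2)
    (g := fun _ : γ × ℕ => (none : Option α))
    (h := fun (p : γ × ℕ) (q : Option α × ℕ) => f p.1 q.2 <|> q.1)
    (Primrec.list_range.comp Primrec.snd) (Primrec.const none)
    (Primrec.option_orElse.comp
      (hf.comp (Primrec.fst.comp Primrec.fst) (Primrec.snd.comp Primrec.snd))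
      (Primrec.fst.comp Primrec.snd))
  exact this.of_eq fun p => rfl

theorem bexist_primrec {q : γ → ℕ → Bool} (hq : Primrec₂ q) :
    Primrec₂ fun a m => bexist (q a) m := by
  have h1 : Primrec₂ fun (a : γ) (t : ℕ) => (bif q a t then some 0 else none : Option ℕ) :=
    Primrec.cond hq (Primrec.const (some 0)) (Primrec.const none)
  exact Primrec.option_isSome.comp (optFind_primrec h1)

theorem ballB_primrec {q : γ → ℕ → Bool} (hq : Primrec₂ q) :
    Primrec₂ fun a m => ballB (q a) m := by
  have h1 : Primrec₂ fun (a : γ) (t : ℕ) => !(q a t) :=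
    (Primrec.dom_finite not).comp hq
  exact (Primrec.dom_finite not).comp (bexist_primrec h1)

end PrimrecLemmas

end SAux

namespace SAux

/-! ### segments -/

def segOf (σ : List Bool) (t : ℕ) : List Bool := (List.range t).map fun i => σ.getD i false

theorem segB_length (A : ℕ → Bool) (s : ℕ) : (segB A s).length = s := by simp [segB]

theorem segB_getD' (A : ℕ → Bool) (d : Bool) {i s : ℕ} (h : i < s) : (segB A s).getD i d = A i := by
  rw [List.getD_eq_getElem _ _ (by simpa [segB_length] using h)]
  simp [segB]

theorem segB_getD (A : ℕ → Bool) {i s : ℕ} (h : i < s) : (segB A s).getD i false = A i :=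
  segB_getD' A false h

theorem segB_getD_ge (A : ℕ → Bool) {i s : ℕ} (h : s ≤ i) : (segB A s).getD i false = false :=
  List.getD_eq_default _ _ (by simpa [segB_length] using h)

theorem segOf_segB (A : ℕ → Bool) {t s : ℕ} (h : t ≤ s) : segOf (segB A s) t = segB A t := by
  refine List.map_congr_left fun i hi => ?_
  exact segB_getD A (lt_of_lt_of_le (List.mem_range.1 hi) h)

/-! ### hat -/

def hat (e : ℕ) (σ : List Bool) (n s : ℕ) : Bool :=
  decide ((optFindLast (fun t => Nat.Partrec.Code.evaln s (Denumerable.ofNat Nat.Partrec.Code e)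
    (Nat.pair (Encodable.encode (segOf σ t)) (Nat.pair n t))) (s + 1)).getD 0 = 1)

theorem segOf_primrec : Primrec₂ segOf := by
  have := Primrec.list_map (α := List Bool × ℕ) (β := ℕ)
    (f := fun p => List.range p.2) (g := fun p i => p.1.getD i false)
    (Primrec.list_range.comp Primrec.snd)
    ((Primrec.list_getD false).comp (Primrec.fst.comp Primrec.fst) Primrec.snd)
  exact this

theorem hat_primrec : Primrec fun p : ℕ × List Bool × ℕ × ℕ => hat p.1 p.2.1 p.2.2.1 p.2.2.2 := by
  have he : Primrec fun p : ℕ × List Bool × ℕ × ℕ => p.1 := Primrec.fst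
  have hσ : Primrec fun p : ℕ × List Bool × ℕ × ℕ => p.2.1 := Primrec.fst.comp Primrec.snd
  have hn : Primrec fun p : ℕ × List Bool × ℕ × ℕ => p.2.2.1 :=
    Primrec.fst.comp (Primrec.snd.comp Primrec.snd)
  have hs : Primrec fun p : ℕ × List Bool × ℕ × ℕ => p.2.2.2 :=
    Primrec.snd.comp (Primrec.snd.comp Primrec.snd)
  have hinner : Primrec₂ fun (p : ℕ × List Bool × ℕ × ℕ) (t : ℕ) =>
      Nat.Partrec.Code.evaln p.2.2.2 (Denumerable.ofNat Nat.Partrec.Code p.1)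
        (Nat.pair (Encodable.encode (segOf p.2.1 t)) (Nat.pair p.2.2.1 t)) := by
    have := Nat.Partrec.Code.primrec_evaln.comp
      (Primrec.pair
        (Primrec.pair (hs.comp Primrec.fst)
          ((Primrec.ofNat Nat.Partrec.Code).comp (he.comp Primrec.fst)))
        (Primrec₂.natPair.comp
          (Primrec.encode.comp (segOf_primrec.comp (hσ.comp Primrec.fst) Primrec.snd))
          (Primrec₂.natPair.comp (hn.comp Primrec.fst) Primrec.snd)))
    exact this
  have hof : Primrec fun p : ℕ × List Bool × ℕ × ℕ =>
      (optFindLast (fun t => Nat.Partrec.Code.evaln p.2.2.2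
        (Denumerable.ofNat Nat.Partrec.Code p.1)
        (Nat.pair (Encodable.encode (segOf p.2.1 t)) (Nat.pair p.2.2.1 t))) (p.2.2.2 + 1)) :=
    (optFindLast_primrec hinner).comp Primrec.id (Primrec.succ.comp hs)
  have := Primrec.eq.comp (Primrec.option_getD.comp hof (Primrec.const 0)) (Primrec.const 1)
  exact this.decide

theorem hat_superapprox {e : ℕ} {F : (ℕ → Bool) → ℕ → Bool} (h : CodeSuperapprox e F) :
    Superapproximates (hat e) F := by
  intro A n
  obtain ⟨b, hev, hiff⟩ := h A n
  refine ⟨b, ?_, hiff⟩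
  rw [Filter.eventually_atTop] at hev ⊢
  obtain ⟨s₀, h₀⟩ := hev
  have hs₀ : cond b 1 0 ∈ (Denumerable.ofNat Nat.Partrec.Code e).eval
      (Nat.pair (Encodable.encode (segB A s₀)) (Nat.pair n s₀)) := by
    rw [h₀ s₀ le_rfl]; exact Part.mem_some _
  obtain ⟨k₀, hk₀⟩ := Nat.Partrec.Code.evaln_complete.1 hs₀
  refine ⟨max s₀ k₀, fun s hs => ?_⟩
  have hs₀s : s₀ ≤ s := le_trans (le_max_left _ _) hs
  have hk₀s : k₀ ≤ s := le_trans (le_max_right _ _) hs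
  set f : ℕ → Option ℕ := fun t => Nat.Partrec.Code.evaln s
    (Denumerable.ofNat Nat.Partrec.Code e)
    (Nat.pair (Encodable.encode (segOf (segB A s) t)) (Nat.pair n t)) with hf
  have hfs₀ : f s₀ = some (cond b 1 0) := by
    have h1 : cond b 1 0 ∈ Nat.Partrec.Code.evaln s (Denumerable.ofNat Nat.Partrec.Code e)
        (Nat.pair (Encodable.encode (segB A s₀)) (Nat.pair n s₀)) :=
      Nat.Partrec.Code.evaln_mono hk₀s hk₀
    rw [hf]
    simpa [segOf_segB A hs₀s, Option.mem_def] using h1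
  rcases optFindLast_spec f (s + 1) with ⟨_, hall⟩ | ⟨t, ht, heq, hsme, hnone⟩
  · exact absurd (hall s₀ (by omega)) (by rw [hfs₀]; simp)
  · have hts : t ≤ s := by omega
    have ht₀ : s₀ ≤ t := by
      by_contra hlt
      push_neg at hlt
      exact absurd (hnone s₀ hlt (by omega)) (by rw [hfs₀]; simp)
    obtain ⟨v, hv⟩ := Option.isSome_iff_exists.1 hsme
    have hvm : v ∈ (Denumerable.ofNat Nat.Partrec.Code e).eval
        (Nat.pair (Encodable.encode (segB A t)) (Nat.pair n t)) := by
      apply Nat.Partrec.Code.evaln_sound (k := s)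
      rw [Option.mem_def, ← segOf_segB A hts]
      exact hv
    rw [h₀ t ht₀] at hvm
    have hveq : v = cond b 1 0 := Part.mem_some_iff.1 hvm
    show hat e (segB A s) n s = b
    unfold hat
    rw [← hf, heq, hv, hveq]
    cases b <;> simp

end SAux

namespace SAux

theorem exists_haltIdx {p : ℕ → ℕ → Bool} (hp : Primrec₂ p) :
    ∃ idx : ℕ → ℕ, Primrec idx ∧ ∀ a x,
      ((Denumerable.ofNat Nat.Partrec.Code (idx a)).eval x).Dom ↔ p a x = true := by
  have hψc : Computable fun y : ℕ =>
      (bif p y.unpair.1 y.unpair.2 then some 0 else none : Option ℕ) := by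
    have hc : Computable fun y : ℕ => p y.unpair.1 y.unpair.2 :=
      hp.to_comp.comp (Computable.fst.comp Computable.unpair)
        (Computable.snd.comp Computable.unpair)
    exact Computable.cond hc (Computable.const (some 0)) (Computable.const none)
  have hψ : Partrec fun y : ℕ =>
      ((bif p y.unpair.1 y.unpair.2 then some 0 else none : Option ℕ) : Part ℕ) :=
    Computable.ofOption hψc
  obtain ⟨c, hc⟩ := Nat.Partrec.Code.exists_code.1 (Partrec.nat_iff.1 hψ)
  refine ⟨fun a => Encodable.encode (c.curry a),
    Primrec.encode.comp (Nat.Partrec.Code.primrec₂_curry.comp (Primrec.const c) Primrec.id),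
    fun a x => ?_⟩
  rw [Denumerable.ofNat_encode, Nat.Partrec.Code.eval_curry, hc]
  cases hpa : p a x <;> simp [Nat.unpair_pair, hpa, Part.ofOption]

theorem ex_cIdx : ∃ cI : ℕ → ℕ, Primrec cI ∧
    ∀ (X : ℕ → Bool) (n : ℕ), haltsRelB X (cI n) ↔ X n = true := by
  have hp : Primrec₂ fun (n x : ℕ) =>
      ((Encodable.decode x.unpair.1 : Option (List Bool)).getD []).getD n false := by
    have hl : Primrec fun q : ℕ × ℕ => (Encodable.decode q.2.unpair.1 : Option (List Bool)).getD [] :=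
      Primrec.option_getD.comp
        (Primrec.decode.comp (Primrec.fst.comp (Primrec.unpair.comp Primrec.snd)))
        (Primrec.const [])
    exact (Primrec.list_getD false).comp hl Primrec.fst
  obtain ⟨idx, hidx, hspec⟩ := exists_haltIdx hp
  refine ⟨idx, hidx, fun X n => ?_⟩
  unfold haltsRelB
  constructor
  · rintro ⟨s, hs⟩
    rw [hspec] at hs
    simp only [Nat.unpair_pair, Encodable.encodek, Option.getD_some] at hs
    by_cases h : n < s
    · rw [segB_getD X h] at hs; exact hs
    · rw [segB_getD_ge X (by omega)] at hs; exact absurd hs (by simp)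
  · intro h
    refine ⟨n + 1, (hspec _ _).2 ?_⟩
    simp only [Nat.unpair_pair, Encodable.encodek, Option.getD_some]
    rw [segB_getD X (Nat.lt_succ_self n)]
    exact h

set_option maxHeartbeats 2000000 in
theorem ex_dIdx : ∃ dI : ℕ → ℕ, Primrec dI ∧ ∀ (e n s : ℕ) (B : ℕ → Bool),
    haltsRelB B (dI (Nat.pair e (Nat.pair n s))) ↔
      ∃ t, s ≤ t ∧ hat e (segB B t) n t ≠ hat e (segB B s) n s := by
  classical
  have hp : Primrec₂ fun (a x : ℕ) =>
      (decide (a.unpair.2.unpair.2 ≤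
          ((Encodable.decode x.unpair.1 : Option (List Bool)).getD []).length) &&
        bexist (fun t => decide (a.unpair.2.unpair.2 ≤ t) &&
          (hat a.unpair.1
              (segOf ((Encodable.decode x.unpair.1 : Option (List Bool)).getD []) t)
              a.unpair.2.unpair.1 t !=
           hat a.unpair.1
              (segOf ((Encodable.decode x.unpair.1 : Option (List Bool)).getD [])
                a.unpair.2.unpair.2)
              a.unpair.2.unpair.1 a.unpair.2.unpair.2))
          (((Encodable.decode x.unpair.1 : Option (List Bool)).getD []).length + 1)) := by
    have he : Primrec fun q : ℕ × ℕ => q.1.unpair.1 :=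
      Primrec.fst.comp (Primrec.unpair.comp Primrec.fst)
    have hn : Primrec fun q : ℕ × ℕ => q.1.unpair.2.unpair.1 :=
      Primrec.fst.comp (Primrec.unpair.comp (Primrec.snd.comp (Primrec.unpair.comp Primrec.fst)))
    have hs : Primrec fun q : ℕ × ℕ => q.1.unpair.2.unpair.2 :=
      Primrec.snd.comp (Primrec.unpair.comp (Primrec.snd.comp (Primrec.unpair.comp Primrec.fst)))
    have hσ : Primrec fun q : ℕ × ℕ => (Encodable.decode q.2.unpair.1 : Option (List Bool)).getD [] :=
      Primrec.option_getD.comp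
        (Primrec.decode.comp (Primrec.fst.comp (Primrec.unpair.comp Primrec.snd)))
        (Primrec.const [])
    have hlen : Primrec fun q : ℕ × ℕ =>
        ((Encodable.decode q.2.unpair.1 : Option (List Bool)).getD []).length :=
      Primrec.list_length.comp hσ
    have hand : Primrec₂ fun (b1 b2 : Bool) => b1 && b2 :=
      Primrec.dom_finite (fun p : Bool × Bool => p.1 && p.2)
    have hbne : Primrec₂ fun (b1 b2 : Bool) => b1 != b2 :=
      Primrec.dom_finite (fun p : Bool × Bool => p.1 != p.2)
    have hq : Primrec₂ fun (q : ℕ × ℕ) (t : ℕ) =>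
        (decide (q.1.unpair.2.unpair.2 ≤ t) &&
          (hat q.1.unpair.1
              (segOf ((Encodable.decode q.2.unpair.1 : Option (List Bool)).getD []) t)
              q.1.unpair.2.unpair.1 t !=
           hat q.1.unpair.1
              (segOf ((Encodable.decode q.2.unpair.1 : Option (List Bool)).getD [])
                q.1.unpair.2.unpair.2)
              q.1.unpair.2.unpair.1 q.1.unpair.2.unpair.2)) := by
      have h1 : Primrec fun r : (ℕ × ℕ) × ℕ => decide (r.1.1.unpair.2.unpair.2 ≤ r.2) :=
        (Primrec.nat_le.comp (hs.comp Primrec.fst) Primrec.snd).decide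
      have hhat1 : Primrec fun r : (ℕ × ℕ) × ℕ =>
          hat r.1.1.unpair.1
            (segOf ((Encodable.decode r.1.2.unpair.1 : Option (List Bool)).getD []) r.2)
            r.1.1.unpair.2.unpair.1 r.2 :=
        hat_primrec.comp (Primrec.pair (he.comp Primrec.fst)
          (Primrec.pair (segOf_primrec.comp (hσ.comp Primrec.fst) Primrec.snd)
            (Primrec.pair (hn.comp Primrec.fst) Primrec.snd)))
      have hhat2 : Primrec fun r : (ℕ × ℕ) × ℕ =>
          hat r.1.1.unpair.1
            (segOf ((Encodable.decode r.1.2.unpair.1 : Option (List Bool)).getD [])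
              r.1.1.unpair.2.unpair.2)
            r.1.1.unpair.2.unpair.1 r.1.1.unpair.2.unpair.2 :=
        hat_primrec.comp (Primrec.pair (he.comp Primrec.fst)
          (Primrec.pair (segOf_primrec.comp (hσ.comp Primrec.fst) (hs.comp Primrec.fst))
            (Primrec.pair (hn.comp Primrec.fst) (hs.comp Primrec.fst))))
      exact hand.comp h1 (hbne.comp hhat1 hhat2)
    have hbex : Primrec fun q : ℕ × ℕ =>
        bexist (fun t => decide (q.1.unpair.2.unpair.2 ≤ t) &&
          (hat q.1.unpair.1
              (segOf ((Encodable.decode q.2.unpair.1 : Option (List Bool)).getD []) t)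
              q.1.unpair.2.unpair.1 t !=
           hat q.1.unpair.1
              (segOf ((Encodable.decode q.2.unpair.1 : Option (List Bool)).getD [])
                q.1.unpair.2.unpair.2)
              q.1.unpair.2.unpair.1 q.1.unpair.2.unpair.2))
          (((Encodable.decode q.2.unpair.1 : Option (List Bool)).getD []).length + 1) :=
      (bexist_primrec hq).comp Primrec.id (Primrec.succ.comp hlen)
    have hle : Primrec fun q : ℕ × ℕ =>
        decide (q.1.unpair.2.unpair.2 ≤
          ((Encodable.decode q.2.unpair.1 : Option (List Bool)).getD []).length) :=
      (Primrec.nat_le.comp hs hlen).decide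
    exact hand.comp hle hbex
  obtain ⟨idx, hidx, hspec⟩ := exists_haltIdx hp
  refine ⟨idx, hidx, fun e n s B => ?_⟩
  unfold haltsRelB
  constructor
  · rintro ⟨s', hs'⟩
    rw [hspec] at hs'
    simp only [Nat.unpair_pair, Encodable.encodek, Option.getD_some, Bool.and_eq_true,
      decide_eq_true_iff, segB_length] at hs'
    obtain ⟨hss', hbex⟩ := hs'
    rw [bexist_iff] at hbex
    obtain ⟨t, ht, htrue⟩ := hbex
    simp only [Bool.and_eq_true, decide_eq_true_iff, bne_iff_ne] at htrue
    obtain ⟨hst, hne⟩ := htrue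
    rw [segOf_segB B (by omega), segOf_segB B hss'] at hne
    exact ⟨t, hst, hne⟩
  · rintro ⟨t, hst, hne⟩
    refine ⟨t, (hspec _ _).2 ?_⟩
    simp only [Nat.unpair_pair, Encodable.encodek, Option.getD_some, Bool.and_eq_true,
      decide_eq_true_iff, segB_length]
    refine ⟨hst, ?_⟩
    rw [bexist_iff]
    refine ⟨t, by omega, ?_⟩
    simp only [Bool.and_eq_true, decide_eq_true_iff, bne_iff_ne]
    rw [segOf_segB B le_rfl, segOf_segB B hst]
    exact ⟨hst, hne⟩

end SAux

namespace SAux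

section GamPsi

variable (cI dI : ℕ → ℕ)

def gam (e₂ : ℕ) (ρ : List Bool) (n : ℕ) : Option Bool :=
  optFind (fun s =>
    bif (decide (dI (Nat.pair e₂ (Nat.pair n s)) < ρ.length) &&
         !(ρ.getD (dI (Nat.pair e₂ (Nat.pair n s))) true) &&
         ballB (fun i => decide (cI i < ρ.length)) s)
    then some (hat e₂ ((List.range s).map fun i => ρ.getD (cI i) false) n s)
    else none) (ρ.length + 1)

def psi (e₁ e₂ : ℕ) (σ : List Bool) (n s : ℕ) : Bool :=
  (optFind (fun k => gam cI dI e₂ ((List.range k).map fun i => hat e₁ σ i s) n) (s + 1)).getD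
    false

variable {cI dI}

set_option maxHeartbeats 1000000 in
theorem gam_primrec (hcI : Primrec cI) (hdI : Primrec dI) : Primrec fun p : ℕ × List Bool × ℕ => gam cI dI p.1 p.2.1 p.2.2 := by
  have he : Primrec fun p : ℕ × List Bool × ℕ => p.1 := Primrec.fst
  have hρ : Primrec fun p : ℕ × List Bool × ℕ => p.2.1 := Primrec.fst.comp Primrec.snd
  have hn : Primrec fun p : ℕ × List Bool × ℕ => p.2.2 := Primrec.snd.comp Primrec.snd
  have hlen : Primrec fun p : ℕ × List Bool × ℕ => p.2.1.length := Primrec.list_length.comp hρ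
  have hand : Primrec₂ fun (b1 b2 : Bool) => b1 && b2 :=
    Primrec.dom_finite (fun p : Bool × Bool => p.1 && p.2)
  have hnot : Primrec fun b : Bool => !b := Primrec.dom_finite not
  -- the `d`-value as a function of ((p, s))
  have hdv : Primrec fun q : (ℕ × List Bool × ℕ) × ℕ =>
      dI (Nat.pair q.1.1 (Nat.pair q.1.2.2 q.2)) :=
    hdI.comp (Primrec₂.natPair.comp (he.comp Primrec.fst)
      (Primrec₂.natPair.comp (hn.comp Primrec.fst) Primrec.snd))
  have hc1 : Primrec fun q : (ℕ × List Bool × ℕ) × ℕ =>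
      decide (dI (Nat.pair q.1.1 (Nat.pair q.1.2.2 q.2)) < q.1.2.1.length) :=
    (Primrec.nat_lt.comp hdv (hlen.comp Primrec.fst)).decide
  have hc2 : Primrec fun q : (ℕ × List Bool × ℕ) × ℕ =>
      !(q.1.2.1.getD (dI (Nat.pair q.1.1 (Nat.pair q.1.2.2 q.2))) true) :=
    hnot.comp ((Primrec.list_getD true).comp (hρ.comp Primrec.fst) hdv)
  have hc3 : Primrec fun q : (ℕ × List Bool × ℕ) × ℕ =>
      ballB (fun i => decide (cI i < q.1.2.1.length)) q.2 := by
    have hq : Primrec₂ fun (q : (ℕ × List Bool × ℕ) × ℕ) (i : ℕ) =>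
        decide (cI i < q.1.2.1.length) :=
      (Primrec.nat_lt.comp (hcI.comp Primrec.snd)
        ((hlen.comp Primrec.fst).comp Primrec.fst)).decide
    exact (ballB_primrec hq).comp Primrec.id Primrec.snd
  have hval : Primrec fun q : (ℕ × List Bool × ℕ) × ℕ =>
      hat q.1.1 ((List.range q.2).map fun i => q.1.2.1.getD (cI i) false) q.1.2.2 q.2 := by
    have hmap : Primrec fun q : (ℕ × List Bool × ℕ) × ℕ =>
        (List.range q.2).map fun i => q.1.2.1.getD (cI i) false := by
      have := Primrec.list_map (α := (ℕ × List Bool × ℕ) × ℕ) (β := ℕ)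
        (f := fun q => List.range q.2) (g := fun q i => q.1.2.1.getD (cI i) false)
        (Primrec.list_range.comp Primrec.snd)
        ((Primrec.list_getD false).comp ((hρ.comp Primrec.fst).comp Primrec.fst)
          (hcI.comp Primrec.snd))
      exact this
    exact hat_primrec.comp (Primrec.pair (he.comp Primrec.fst)
      (Primrec.pair hmap (Primrec.pair (hn.comp Primrec.fst) Primrec.snd)))
  have hinner : Primrec₂ fun (p : ℕ × List Bool × ℕ) (s : ℕ) =>
      (bif (decide (dI (Nat.pair p.1 (Nat.pair p.2.2 s)) < p.2.1.length) &&
           !(p.2.1.getD (dI (Nat.pair p.1 (Nat.pair p.2.2 s))) true) &&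
           ballB (fun i => decide (cI i < p.2.1.length)) s)
      then some (hat p.1 ((List.range s).map fun i => p.2.1.getD (cI i) false) p.2.2 s)
      else none : Option Bool) :=
    Primrec.cond (hand.comp (hand.comp hc1 hc2) hc3)
      (Primrec.option_some.comp hval) (Primrec.const none)
  exact (optFind_primrec hinner).comp Primrec.id (Primrec.succ.comp hlen)

end GamPsi

end SAux

namespace SAux
attribute [local irreducible] hat gam optFind optFindLast segOf ballB bexist
section GamPsi
variable {cI dI : ℕ → ℕ}

set_option maxHeartbeats 8000000 in
theorem psi_primrec (hcI : Primrec cI) (hdI : Primrec dI) :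
    Primrec fun p : (ℕ × ℕ) × List Bool × ℕ × ℕ =>
      psi cI dI p.1.1 p.1.2 p.2.1 p.2.2.1 p.2.2.2 := by
  have he1 : Primrec fun p : (ℕ × ℕ) × List Bool × ℕ × ℕ => p.1.1 :=
    Primrec.fst.comp Primrec.fst
  have he2 : Primrec fun p : (ℕ × ℕ) × List Bool × ℕ × ℕ => p.1.2 :=
    Primrec.snd.comp Primrec.fst
  have hσ : Primrec fun p : (ℕ × ℕ) × List Bool × ℕ × ℕ => p.2.1 :=
    Primrec.fst.comp Primrec.snd
  have hn : Primrec fun p : (ℕ × ℕ) × List Bool × ℕ × ℕ => p.2.2.1 :=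
    Primrec.fst.comp (Primrec.snd.comp Primrec.snd)
  have hs : Primrec fun p : (ℕ × ℕ) × List Bool × ℕ × ℕ => p.2.2.2 :=
    Primrec.snd.comp (Primrec.snd.comp Primrec.snd)
  have hτ : Primrec₂ fun (p : (ℕ × ℕ) × List Bool × ℕ × ℕ) (k : ℕ) =>
      (List.range k).map fun i => hat p.1.1 p.2.1 i p.2.2.2 := by
    have := Primrec.list_map (α := ((ℕ × ℕ) × List Bool × ℕ × ℕ) × ℕ) (β := ℕ)
      (f := fun q => List.range q.2) (g := fun q i => hat q.1.1.1 q.1.2.1 i q.1.2.2.2)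
      (Primrec.list_range.comp Primrec.snd)
      (hat_primrec.comp (Primrec.pair ((he1.comp Primrec.fst).comp Primrec.fst)
        (Primrec.pair ((hσ.comp Primrec.fst).comp Primrec.fst)
          (Primrec.pair Primrec.snd ((hs.comp Primrec.fst).comp Primrec.fst)))))
    exact this
  have hinner : Primrec₂ fun (p : (ℕ × ℕ) × List Bool × ℕ × ℕ) (k : ℕ) =>
      gam cI dI p.1.2 ((List.range k).map fun i => hat p.1.1 p.2.1 i p.2.2.2) p.2.2.1 :=
    (gam_primrec hcI hdI).comp (Primrec.pair (he2.comp Primrec.fst)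
      (Primrec.pair hτ (hn.comp Primrec.fst)))
  exact Primrec.option_getD.comp
    ((optFind_primrec hinner).comp Primrec.id (Primrec.succ.comp hs)) (Primrec.const false)

end GamPsi
end SAux

open Filter
namespace SAux
section Spec
open scoped Classical
variable {cI dI : ℕ → ℕ}

theorem eventually_all_lt {p : ℕ → ℕ → Prop} (h : ∀ i, ∀ᶠ s in atTop, p i s) :
    ∀ k, ∀ᶠ s in atTop, ∀ i < k, p i s := by
  intro k
  induction k with
  | zero => exact Filter.Eventually.of_forall (by omega)
  | succ k ih =>
    filter_upwards [ih, h k] with s hs1 hs2 i hi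
    rcases Nat.lt_succ_iff_lt_or_eq.1 hi with h' | rfl
    · exact hs1 i h'
    · exact hs2

theorem gam_sound
    (hc : ∀ (X : ℕ → Bool) (n : ℕ), haltsRelB X (cI n) ↔ X n = true)
    (hd : ∀ (e n s : ℕ) (B : ℕ → Bool),
      haltsRelB B (dI (Nat.pair e (Nat.pair n s))) ↔
        ∃ t, s ≤ t ∧ hat e (segB B t) n t ≠ hat e (segB B s) n s)
    {e₂ : ℕ} {B : ℕ → Bool} {n : ℕ} {b : Bool}
    (hb : ∀ᶠ s in atTop, hat e₂ (segB B s) n s = b) (k : ℕ) {v : Bool}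
    (hv : gam cI dI e₂ (segB (fun i => decide (haltsRelB B i)) k) n = some v) : v = b := by
  set chi : ℕ → Bool := fun i => decide (haltsRelB B i) with hchi
  set ρ : List Bool := segB chi k with hρ
  have hρlen : ρ.length = k := segB_length _ _
  unfold gam at hv
  rcases optFind_spec _ (ρ.length + 1) with ⟨hnone, _⟩ | ⟨s', hs', heq, hsme, _⟩
  · rw [hnone] at hv; exact absurd hv (by simp)
  · rw [heq] at hv
    rcases hcond : (decide (dI (Nat.pair e₂ (Nat.pair n s')) < ρ.length) &&
         !(ρ.getD (dI (Nat.pair e₂ (Nat.pair n s'))) true) &&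
         ballB (fun i => decide (cI i < ρ.length)) s') with _ | _
    · rw [hcond] at hv; exact absurd hv (by simp)
    · rw [hcond] at hv
      simp only [cond_true, Option.some_inj] at hv
      simp only [Bool.and_eq_true, decide_eq_true_iff, Bool.not_eq_true'] at hcond
      obtain ⟨⟨hdlt, hgetD⟩, hball⟩ := hcond
      rw [hρlen] at hdlt
      rw [ballB_iff] at hball
      have hstable : ∀ t, s' ≤ t → hat e₂ (segB B t) n t = hat e₂ (segB B s') n s' := by
        have hnothalts : ¬ haltsRelB B (dI (Nat.pair e₂ (Nat.pair n s'))) := by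
          intro hh
          have h2 : chi (dI (Nat.pair e₂ (Nat.pair n s'))) = true := by
            rw [hchi]; simp only [decide_eq_true_iff]; exact hh
          rw [hρ, segB_getD' chi true hdlt, h2] at hgetD
          simp at hgetD
        rw [hd] at hnothalts
        push_neg at hnothalts
        exact hnothalts
      have hbits : ((List.range s').map fun i => ρ.getD (cI i) false) = segB B s' := by
        refine List.map_congr_left fun i hi => ?_
        have hik : cI i < k := by
          have := hball i (List.mem_range.1 hi)
          rw [hρlen] at this
          exact of_decide_eq_true this
        rw [hρ, segB_getD' chi false hik, hchi]
        show decide (haltsRelB B (cI i)) = B i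
        have h3 : decide (haltsRelB B (cI i)) = decide (B i = true) :=
          decide_eq_decide.2 (hc B i)
        rw [h3]
        cases hBi : B i <;> simp [hBi]
      rw [hbits] at hv
      rw [eventually_atTop] at hb
      obtain ⟨s₁, h₁⟩ := hb
      have h2 := hstable (max s' s₁) (le_max_left _ _)
      rw [h₁ (max s' s₁) (le_max_right _ _)] at h2
      rw [← hv, h2]

theorem gam_total
    (hd : ∀ (e n s : ℕ) (B : ℕ → Bool),
      haltsRelB B (dI (Nat.pair e (Nat.pair n s))) ↔
        ∃ t, s ≤ t ∧ hat e (segB B t) n t ≠ hat e (segB B s) n s)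
    {e₂ : ℕ} {B : ℕ → Bool} {n : ℕ} {b : Bool}
    (hb : ∀ᶠ s in atTop, hat e₂ (segB B s) n s = b) :
    ∃ k, (gam cI dI e₂ (segB (fun i => decide (haltsRelB B i)) k) n).isSome = true := by
  set chi : ℕ → Bool := fun i => decide (haltsRelB B i) with hchi
  rw [eventually_atTop] at hb
  obtain ⟨s₀, h₀⟩ := hb
  have hnothalts : ¬ haltsRelB B (dI (Nat.pair e₂ (Nat.pair n s₀))) := by
    rw [hd]
    rintro ⟨t, ht, hne⟩
    rw [h₀ t ht, h₀ s₀ le_rfl] at hne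
    exact hne rfl
  refine ⟨max (dI (Nat.pair e₂ (Nat.pair n s₀)) + 1)
    (max s₀ ((Finset.range s₀).sup fun i => cI i + 1)), ?_⟩
  set k := max (dI (Nat.pair e₂ (Nat.pair n s₀)) + 1)
    (max s₀ ((Finset.range s₀).sup fun i => cI i + 1)) with hk
  set ρ : List Bool := segB chi k with hρ
  have hρlen : ρ.length = k := segB_length _ _
  have hdlt : dI (Nat.pair e₂ (Nat.pair n s₀)) < k := lt_of_lt_of_le (Nat.lt_succ_self _)
    (le_max_left _ _)
  have hcond : (decide (dI (Nat.pair e₂ (Nat.pair n s₀)) < ρ.length) &&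
      !(ρ.getD (dI (Nat.pair e₂ (Nat.pair n s₀))) true) &&
      ballB (fun i => decide (cI i < ρ.length)) s₀) = true := by
    simp only [Bool.and_eq_true, decide_eq_true_iff, Bool.not_eq_true']
    refine ⟨⟨by rw [hρlen]; exact hdlt, ?_⟩, ?_⟩
    · rw [hρ, segB_getD' chi true hdlt, hchi]
      simp only [decide_eq_false_iff_not]
      exact hnothalts
    · rw [ballB_iff]
      intro i hi
      have hle : cI i + 1 ≤ (Finset.range s₀).sup fun i => cI i + 1 :=
        Finset.le_sup (f := fun i => cI i + 1) (Finset.mem_range.2 hi)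
      rw [hρlen]
      simp only [decide_eq_true_eq]
      omega
  unfold gam
  rcases optFind_spec (fun s =>
      bif (decide (dI (Nat.pair e₂ (Nat.pair n s)) < ρ.length) &&
         !(ρ.getD (dI (Nat.pair e₂ (Nat.pair n s))) true) &&
         ballB (fun i => decide (cI i < ρ.length)) s)
      then some (hat e₂ ((List.range s).map fun i => ρ.getD (cI i) false) n s)
      else none) (ρ.length + 1) with ⟨_, hall⟩ | ⟨s', _, heq, hsme, _⟩
  · have hs₀ : s₀ < ρ.length + 1 := by
      rw [hρlen]
      have : s₀ ≤ k := le_trans (le_max_left _ _) (le_max_right _ _)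
      omega
    have := hall s₀ hs₀
    rw [hcond] at this
    simp at this
  · rw [heq]
    exact hsme

end Spec
end SAux

open Filter
namespace SAux
section Final
open scoped Classical
variable {cI dI : ℕ → ℕ}

theorem psi_superapprox
    (hc : ∀ (X : ℕ → Bool) (n : ℕ), haltsRelB X (cI n) ↔ X n = true)
    (hd : ∀ (e n s : ℕ) (B : ℕ → Bool),
      haltsRelB B (dI (Nat.pair e (Nat.pair n s))) ↔
        ∃ t, s ≤ t ∧ hat e (segB B t) n t ≠ hat e (segB B s) n s)
    {e₁ e₂ : ℕ} {F G : (ℕ → Bool) → ℕ → Bool}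
    (h₁ : Superapproximates (hat e₁) F) (h₂ : Superapproximates (hat e₂) G) :
    Superapproximates (psi cI dI e₁ e₂) (fun A => G (F A)) := by
  intro A n
  obtain ⟨b, hb, hbiff⟩ := h₂ (F A) n
  refine ⟨b, ?_, hbiff⟩
  obtain ⟨k₁, hk₁⟩ := gam_total hd hb
  obtain ⟨b', hb'⟩ := Option.isSome_iff_exists.1 hk₁
  have hb'b : b' = b := gam_sound hc hd hb k₁ hb'
  rw [hb'b] at hb'
  have hev : ∀ i, ∀ᶠ s in atTop, hat e₁ (segB A s) i s = decide (haltsRelB (F A) i) := by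
    intro i
    obtain ⟨bi, hbi, hbiiff⟩ := h₁ A i
    have hbieq : bi = decide (haltsRelB (F A) i) := by
      by_cases hh : haltsRelB (F A) i
      · simp [hh, hbiiff.2 hh]
      · have h4 : bi = false := by
          cases hbi' : bi
          · rfl
          · exact absurd (hbiiff.1 hbi') hh
        simp [hh, h4]
    rw [hbieq] at hbi
    exact hbi
  filter_upwards [eventually_all_lt hev k₁, eventually_ge_atTop k₁] with s hs hk₁s
  have hτeq : ∀ k ≤ k₁, ((List.range k).map fun i => hat e₁ (segB A s) i s) =
      segB (fun i => decide (haltsRelB (F A) i)) k := by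
    intro k hk
    exact List.map_congr_left fun i hi => hs i (lt_of_lt_of_le (List.mem_range.1 hi) hk)
  show psi cI dI e₁ e₂ (segB A s) n s = b
  unfold psi
  rcases optFind_spec
      (fun k => gam cI dI e₂ ((List.range k).map fun i => hat e₁ (segB A s) i s) n) (s + 1)
    with ⟨_, hall⟩ | ⟨k', hk', heq, hsme, hnone⟩
  · refine absurd (hall k₁ (by omega)) ?_
    rw [hτeq k₁ le_rfl, hb']
    simp
  · have hk'le : k' ≤ k₁ := by
      by_contra hlt
      push_neg at hlt
      refine absurd (hnone k₁ hlt) ?_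
      rw [hτeq k₁ le_rfl, hb']
      simp
    obtain ⟨v, hv⟩ := Option.isSome_iff_exists.1 hsme
    have hveq : v = b := by
      apply gam_sound hc hd hb k'
      rw [← hτeq k' hk'le]
      exact hv
    rw [heq, hv, hveq]
    rfl

attribute [local irreducible] psi gam hat optFind optFindLast bexist ballB segOf

theorem code_of_superapprox {φ : List Bool → ℕ → ℕ → Bool}
    (hφ : Computable fun x : List Bool × ℕ × ℕ => φ x.1 x.2.1 x.2.2)
    {F : (ℕ → Bool) → ℕ → Bool} (hS : Superapproximates φ F) :
    ∃ e, CodeSuperapprox e F := by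
  set W : ℕ → ℕ := fun x =>
    cond (φ ((Encodable.decode x.unpair.1 : Option (List Bool)).getD [])
      x.unpair.2.unpair.1 x.unpair.2.unpair.2) 1 0 with hW
  have hWc : Computable W := by
    have hσ : Computable fun x : ℕ => (Encodable.decode x.unpair.1 : Option (List Bool)).getD [] :=
      Computable.option_getD
        (Computable.decode.comp (Computable.fst.comp Computable.unpair))
        (Computable.const [])
    have hn : Computable fun x : ℕ => x.unpair.2.unpair.1 :=
      Computable.fst.comp (Computable.unpair.comp (Computable.snd.comp Computable.unpair))
    have hs : Computable fun x : ℕ => x.unpair.2.unpair.2 :=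
      Computable.snd.comp (Computable.unpair.comp (Computable.snd.comp Computable.unpair))
    exact Computable.cond (hφ.comp (Computable.pair hσ (Computable.pair hn hs)))
      (Computable.const 1) (Computable.const 0)
  obtain ⟨c, hcode⟩ := Nat.Partrec.Code.exists_code.1 (Partrec.nat_iff.1 hWc)
  refine ⟨Encodable.encode c, fun A n => ?_⟩
  obtain ⟨b, hev, hiff⟩ := hS A n
  refine ⟨b, ?_, hiff⟩
  filter_upwards [hev] with s hsv
  rw [Denumerable.ofNat_encode, hcode]
  show Part.some (W (Nat.pair (Encodable.encode (segB A s)) (Nat.pair n s))) = _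
  rw [hW]
  simp only [Nat.unpair_pair, Encodable.encodek, Option.getD_some]
  rw [hsv]

set_option maxHeartbeats 8000000 in
theorem exists_u (hcI : Primrec cI) (hdI : Primrec dI) :
    ∃ u : ℕ → ℕ → ℕ, Computable₂ u ∧ ∀ e₁ e₂ (σ : List Bool) (n s : ℕ),
      (Denumerable.ofNat Nat.Partrec.Code (u e₁ e₂)).eval
          (Nat.pair (Encodable.encode σ) (Nat.pair n s)) =
        Part.some (cond (psi cI dI e₁ e₂ σ n s) 1 0) := by
  set W : ℕ → ℕ := fun y =>
    cond (psi cI dI y.unpair.1.unpair.1 y.unpair.1.unpair.2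
      ((Encodable.decode y.unpair.2.unpair.1 : Option (List Bool)).getD [])
      y.unpair.2.unpair.2.unpair.1 y.unpair.2.unpair.2.unpair.2) 1 0 with hW
  have hWp : Primrec W := by
    have hu : Primrec Nat.unpair := Primrec.unpair
    have he1 : Primrec fun y : ℕ => y.unpair.1.unpair.1 :=
      Primrec.fst.comp (hu.comp (Primrec.fst.comp hu))
    have he2 : Primrec fun y : ℕ => y.unpair.1.unpair.2 :=
      Primrec.snd.comp (hu.comp (Primrec.fst.comp hu))
    have hx : Primrec fun y : ℕ => y.unpair.2 := Primrec.snd.comp hu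
    have hσ : Primrec fun y : ℕ =>
        (Encodable.decode y.unpair.2.unpair.1 : Option (List Bool)).getD [] :=
      Primrec.option_getD.comp
        (Primrec.decode.comp (Primrec.fst.comp (hu.comp hx))) (Primrec.const [])
    have hn : Primrec fun y : ℕ => y.unpair.2.unpair.2.unpair.1 :=
      Primrec.fst.comp (hu.comp (Primrec.snd.comp (hu.comp hx)))
    have hs : Primrec fun y : ℕ => y.unpair.2.unpair.2.unpair.2 :=
      Primrec.snd.comp (hu.comp (Primrec.snd.comp (hu.comp hx)))
    have htup : Primrec fun y : ℕ =>
        ((y.unpair.1.unpair.1, y.unpair.1.unpair.2),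
          ((Encodable.decode y.unpair.2.unpair.1 : Option (List Bool)).getD [],
            (y.unpair.2.unpair.2.unpair.1, y.unpair.2.unpair.2.unpair.2))) :=
      Primrec.pair (Primrec.pair he1 he2) (Primrec.pair hσ (Primrec.pair hn hs))
    exact Primrec.cond ((psi_primrec hcI hdI).comp htup) (Primrec.const 1) (Primrec.const 0)
  obtain ⟨cW, hcode⟩ := Nat.Partrec.Code.exists_code.1 (Partrec.nat_iff.1 hWp.to_comp)
  refine ⟨fun e₁ e₂ => Encodable.encode (cW.curry (Nat.pair e₁ e₂)), ?_, ?_⟩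
  · have : Primrec₂ fun e₁ e₂ : ℕ => Encodable.encode (cW.curry (Nat.pair e₁ e₂)) :=
      Primrec.encode.comp (Nat.Partrec.Code.primrec₂_curry.comp
        (Primrec.const cW) Primrec₂.natPair)
    exact this.to_comp
  · intro e₁ e₂ σ n s
    rw [Denumerable.ofNat_encode, Nat.Partrec.Code.eval_curry, hcode]
    show Part.some (W _) = _
    rw [hW]
    simp only [Nat.unpair_pair, Encodable.encodek, Option.getD_some]

end Final
end SAux

open Filter

attribute [local irreducible] SAux.psi SAux.gam SAux.hat SAux.optFind SAux.optFindLast SAux.bexist SAux.ballB SAux.segOf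

set_option maxHeartbeats 1000000 in
theorem stmt8 :
    (∀ F G : (ℕ → Bool) → ℕ → Bool, Superapproximable F → Superapproximable G →
        Superapproximable fun A => G (F A)) ∧
    ∃ u : ℕ → ℕ → ℕ, Computable₂ u ∧
      ∀ (e₁ e₂ : ℕ) (F G : (ℕ → Bool) → ℕ → Bool),
        CodeSuperapprox e₁ F → CodeSuperapprox e₂ G →
        CodeSuperapprox (u e₁ e₂) fun A => G (F A) := by
  obtain ⟨cI, hcI, hc⟩ := SAux.ex_cIdx
  obtain ⟨dI, hdI, hd⟩ := SAux.ex_dIdx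
  obtain ⟨u, hu, huspec⟩ := SAux.exists_u hcI hdI
  constructor
  · rintro F G ⟨φF, hφF, hSF⟩ ⟨φG, hφG, hSG⟩
    obtain ⟨e₁, h1⟩ := SAux.code_of_superapprox hφF hSF
    obtain ⟨e₂, h2⟩ := SAux.code_of_superapprox hφG hSG
    refine ⟨SAux.psi cI dI e₁ e₂, ?_,
      SAux.psi_superapprox hc hd (SAux.hat_superapprox h1) (SAux.hat_superapprox h2)⟩
    have hpr : Primrec fun x : List Bool × ℕ × ℕ => SAux.psi cI dI e₁ e₂ x.1 x.2.1 x.2.2 :=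
      (SAux.psi_primrec hcI hdI).comp (Primrec.pair (Primrec.const (e₁, e₂)) Primrec.id)
    exact hpr.to_comp
  · refine ⟨u, hu, ?_⟩
    intro e₁ e₂ F G h1 h2 A n
    obtain ⟨b, hev, hiff⟩ :=
      SAux.psi_superapprox hc hd (SAux.hat_superapprox h1) (SAux.hat_superapprox h2) A n
    refine ⟨b, ?_, hiff⟩
    filter_upwards [hev] with s hs
    rw [huspec, hs]
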